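/- Let ρ > 0 be a real number and let p, q, m be natural numbers with p ≤ q and q ≤ m − 1. Then the function (ξ₁,ξ₂) ↦ ξ₁^{2(q−p)} · ξ₂^{2p} · ((ξ₁² + ξ₂²)/ρ + 1)^{−(m+1)} is integrable on ℝ², and ∫_{ℝ²} ξ₁^{2(q−p)} ξ₂^{2p} ((ξ₁²+ξ₂²)/ρ + 1)^{−(m+1)} dξ₁ dξ₂ = ρ^{q+1} · Γ(q−p+1/2) · Γ(p+1/2) · Γ(m−q) / Γ(m+1). -/

import Mathlib

open MeasureTheory Real

open Set

lemma my_real_beta {u v : ℝ} (hu : 0 < u) (hv : 0 < v) :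
    ∫ x in (0:ℝ)..1, x ^ (u - 1) * (1 - x) ^ (v - 1) =
      Real.Gamma u * Real.Gamma v / Real.Gamma (u + v) := by
  have key := Complex.Gamma_mul_Gamma_eq_betaIntegral (s := u) (t := v)
    (by simpa using hu) (by simpa using hv)
  have hcast : Complex.betaIntegral u v =
      ((∫ x in (0:ℝ)..1, x ^ (u - 1) * (1 - x) ^ (v - 1) : ℝ) : ℂ) := by
    rw [Complex.betaIntegral, ← intervalIntegral.integral_ofReal]
    refine intervalIntegral.integral_congr fun x hx => ?_
    rw [uIcc_of_le zero_le_one] at hx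
    rw [show ((u:ℂ) - 1) = ((u - 1 : ℝ) : ℂ) by push_cast; ring,
      show ((v:ℂ) - 1) = ((v - 1 : ℝ) : ℂ) by push_cast; ring,
      show (1 - (x:ℂ)) = ((1 - x : ℝ) : ℂ) by push_cast; ring,
      ← Complex.ofReal_cpow hx.1, ← Complex.ofReal_cpow (by linarith [hx.2])]
    push_cast
    ring
  rw [hcast, ← Complex.ofReal_add, Complex.Gamma_ofReal, Complex.Gamma_ofReal,
    Complex.Gamma_ofReal, ← Complex.ofReal_mul, ← Complex.ofReal_mul] at key
  have := Complex.ofReal_injective key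
  have hG : Real.Gamma (u + v) ≠ 0 := (Real.Gamma_pos_of_pos (by linarith)).ne'
  field_simp
  linarith [this]

lemma my_beta_integrable {u v : ℝ} (hu : 0 < u) (hv : 0 < v) :
    IntegrableOn (fun x : ℝ => x ^ (u - 1) * (1 - x) ^ (v - 1)) (Ioo 0 1) := by
  have h := Complex.betaIntegral_convergent (u := u) (v := v) (by simpa using hu)
    (by simpa using hv)
  rw [intervalIntegrable_iff_integrableOn_Ioo_of_le zero_le_one] at h
  have h2 := h.re
  refine (integrableOn_congr_fun (fun x hx => ?_) measurableSet_Ioo).mp h2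
  rw [show ((u:ℂ) - 1) = ((u - 1 : ℝ) : ℂ) by push_cast; ring,
    show ((v:ℂ) - 1) = ((v - 1 : ℝ) : ℂ) by push_cast; ring,
    show (1 - (x:ℂ)) = ((1 - x : ℝ) : ℂ) by push_cast; ring,
    ← Complex.ofReal_cpow hx.1.le, ← Complex.ofReal_cpow (by linarith [hx.2])]
  rw [← Complex.ofReal_mul]; simp

lemma my_cov_ptwise {a s : ℝ} {w : ℝ} (hw : w ∈ Ioo (0:ℝ) 1) :
    |((1 - w) ^ 2)⁻¹| • ((w / (1 - w)) ^ (a - 1) * (1 + w / (1 - w)) ^ (-s))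
        = w ^ (a - 1) * (1 - w) ^ (s - a - 1) := by
  obtain ⟨hw0, hw1⟩ := hw
  have h1w : (0:ℝ) < 1 - w := by linarith
  have e0 : 1 + w / (1 - w) = (1 - w)⁻¹ := by field_simp; ring
  have key : ∀ r : ℝ, ((1 - w) ^ r)⁻¹ = (1 - w) ^ (-r) :=
    fun r => (Real.rpow_neg h1w.le r).symm
  rw [smul_eq_mul, e0, abs_of_nonneg (by positivity),
    Real.div_rpow hw0.le h1w.le, Real.inv_rpow h1w.le, Real.rpow_neg h1w.le s, inv_inv,
    div_eq_mul_inv, ← Real.rpow_natCast (1 - w) 2, key, key,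
    show s - a - 1 = -((2:ℕ):ℝ) + (-(a - 1) + s) by push_cast; ring,
    Real.rpow_add h1w, Real.rpow_add h1w]
  ring

lemma my_beta_Ioi {a s : ℝ} (ha : 0 < a) (has : a < s) :
    IntegrableOn (fun v : ℝ => v ^ (a - 1) * (1 + v) ^ (-s)) (Ioi 0) ∧
    ∫ v in Ioi (0:ℝ), v ^ (a - 1) * (1 + v) ^ (-s)
      = Real.Gamma a * Real.Gamma (s - a) / Real.Gamma s := by
  have himg : (fun w : ℝ => w / (1 - w)) '' Ioo 0 1 = Ioi 0 := by
    ext v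
    constructor
    · rintro ⟨w, ⟨hw0, hw1⟩, rfl⟩
      have : (0:ℝ) < 1 - w := by linarith
      exact div_pos hw0 this
    · intro hv
      have hv' : (0:ℝ) < v := hv
      refine ⟨v / (1 + v), ⟨by positivity, ?_⟩, ?_⟩
      · rw [div_lt_one (by linarith)]; linarith
      · field_simp; ring
  have hderiv : ∀ w ∈ Ioo (0:ℝ) 1,
      HasDerivWithinAt (fun w : ℝ => w / (1 - w)) (((1 - w) ^ 2)⁻¹) (Ioo 0 1) w := by
    intro w hw
    have h1w : (1:ℝ) - w ≠ 0 := by have := hw.2; intro h; simp only [sub_eq_zero] at h; linarith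
    have := (hasDerivAt_id w).div ((hasDerivAt_id w).const_sub 1) h1w
    have e : ((1 - w) ^ 2)⁻¹ = (1 * (1 - w) - w * -1) / (1 - w) ^ 2 := by ring
    rw [e]; exact this.hasDerivWithinAt
  have hinj : InjOn (fun w : ℝ => w / (1 - w)) (Ioo 0 1) := by
    intro x hx y hy hxy
    have hx1 : (1:ℝ) - x ≠ 0 := by have := hx.2; intro h; simp only [sub_eq_zero] at h; linarith
    have hy1 : (1:ℝ) - y ≠ 0 := by have := hy.2; intro h; simp only [sub_eq_zero] at h; linarith
    field_simp at hxy
    nlinarith [hxy]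
  have hint : IntegrableOn (fun v : ℝ => v ^ (a - 1) * (1 + v) ^ (-s)) (Ioi 0) := by
    rw [← himg, integrableOn_image_iff_integrableOn_abs_deriv_smul measurableSet_Ioo
      hderiv hinj]
    refine (integrableOn_congr_fun (fun w hw => ?_) measurableSet_Ioo).mpr
      (my_beta_integrable ha (by linarith : (0:ℝ) < s - a))
    exact my_cov_ptwise hw
  refine ⟨hint, ?_⟩
  rw [← himg, integral_image_eq_integral_abs_deriv_smul measurableSet_Ioo hderiv hinj]
  rw [setIntegral_congr_fun measurableSet_Ioo (fun w hw => my_cov_ptwise hw)]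
  rw [← MeasureTheory.integral_Ioc_eq_integral_Ioo,
    ← intervalIntegral.integral_of_le zero_le_one,
    show s - a - 1 = (s - a) - 1 by ring, my_real_beta ha (by linarith)]
  rw [show a + (s - a) = s by ring]

lemma my_sq_ptwise {n : ℕ} {s : ℝ} {u : ℝ} (hu : u ∈ Ioi (0:ℝ)) :
    |2 * u| • ((u ^ 2) ^ ((n:ℝ) + 1/2 - 1) * (1 + u ^ 2) ^ (-s))
      = 2 * (u ^ (2 * n) * (1 + u ^ 2) ^ (-s)) := by
  have hu' : (0:ℝ) < u := hu
  have e1 : (u ^ 2) ^ ((n:ℝ) + 1/2 - 1) = u ^ (2 * n) / u := by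
    rw [← Real.rpow_natCast u 2, ← Real.rpow_mul hu'.le,
      show ((2:ℕ):ℝ) * ((n:ℝ) + 1/2 - 1) = ((2 * n : ℕ) : ℝ) - 1 by push_cast; ring,
      Real.rpow_sub hu', Real.rpow_one, Real.rpow_natCast]
  rw [smul_eq_mul, abs_of_nonneg (by positivity), e1]
  field_simp

lemma my_even_moment {n : ℕ} {s : ℝ} (h : (n:ℝ) + 1/2 < s) :
    Integrable (fun u : ℝ => u ^ (2 * n) * (1 + u ^ 2) ^ (-s)) ∧
    ∫ u : ℝ, u ^ (2 * n) * (1 + u ^ 2) ^ (-s)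
      = Real.Gamma ((n:ℝ) + 1/2) * Real.Gamma (s - ((n:ℝ) + 1/2)) / Real.Gamma s := by
  set a : ℝ := (n:ℝ) + 1/2 with ha_def
  have ha : 0 < a := by positivity
  have has : a < s := h
  obtain ⟨hBint, hBval⟩ := my_beta_Ioi ha has
  have himg : (fun u : ℝ => u ^ 2) '' Ioi 0 = Ioi (0:ℝ) := by
    ext v
    constructor
    · rintro ⟨u, hu, rfl⟩; exact pow_pos (show (0:ℝ) < u from hu) 2
    · intro hv
      exact ⟨Real.sqrt v, Real.sqrt_pos.mpr hv, Real.sq_sqrt (le_of_lt hv)⟩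
  have hderiv : ∀ u ∈ Ioi (0:ℝ),
      HasDerivWithinAt (fun u : ℝ => u ^ 2) (2 * u) (Ioi 0) u := by
    intro u _
    simpa using ((hasDerivAt_pow 2 u).hasDerivWithinAt (s := Ioi 0))
  have hinj : InjOn (fun u : ℝ => u ^ 2) (Ioi 0) := by
    intro x hx y hy hxy
    have hx' : (0:ℝ) < x := hx
    have hy' : (0:ℝ) < y := hy
    have hxy' : x ^ 2 = y ^ 2 := hxy
    nlinarith [hxy']
  -- transfer to half line
  have hIoi : IntegrableOn (fun u : ℝ => u ^ (2 * n) * (1 + u ^ 2) ^ (-s)) (Ioi 0) := by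
    rw [← himg, integrableOn_image_iff_integrableOn_abs_deriv_smul measurableSet_Ioi
      hderiv hinj] at hBint
    have := (integrableOn_congr_fun (fun u hu => my_sq_ptwise hu) measurableSet_Ioi).mp hBint
    simpa [IntegrableOn] using this.const_mul (1/2)
  have hIoi_val : ∫ u in Ioi (0:ℝ), u ^ (2 * n) * (1 + u ^ 2) ^ (-s)
      = (Real.Gamma a * Real.Gamma (s - a) / Real.Gamma s) / 2 := by
    rw [← himg, integral_image_eq_integral_abs_deriv_smul measurableSet_Ioi hderiv hinj,
      setIntegral_congr_fun measurableSet_Ioi (fun u hu => my_sq_ptwise hu),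
      integral_const_mul] at hBval
    linarith [hBval]
  -- even function
  have heven : ∀ u : ℝ, (|u|) ^ (2 * n) * (1 + |u| ^ 2) ^ (-s)
      = u ^ (2 * n) * (1 + u ^ 2) ^ (-s) := by
    intro u
    rw [pow_mul, pow_mul, sq_abs]
  have hIic : IntegrableOn (fun u : ℝ => u ^ (2 * n) * (1 + u ^ 2) ^ (-s)) (Iic 0) := by
    rw [← Measure.map_neg_eq_self (volume : Measure ℝ)]
    let mne : MeasurableEmbedding fun x : ℝ => -x := (Homeomorph.neg ℝ).measurableEmbedding
    rw [mne.integrableOn_map_iff]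
    have : ((fun x : ℝ => -x) ⁻¹' Iic 0) = Ici (0:ℝ) := by
      ext x; simp
    rw [this]
    refine (integrableOn_congr_fun (fun u _ => ?_) measurableSet_Ici).mpr
      ((integrableOn_Ici_iff_integrableOn_Ioi (hb := by simp)).mpr hIoi)
    show (-u) ^ (2 * n) * (1 + (-u) ^ 2) ^ (-s) = u ^ (2 * n) * (1 + u ^ 2) ^ (-s)
    rw [pow_mul, pow_mul, neg_sq]
  have hint : Integrable (fun u : ℝ => u ^ (2 * n) * (1 + u ^ 2) ^ (-s)) := by
    rw [← integrableOn_univ, ← Iic_union_Ioi (a := (0:ℝ))]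
    exact hIic.union hIoi
  refine ⟨hint, ?_⟩
  have := integral_comp_abs (f := fun x : ℝ => x ^ (2 * n) * (1 + x ^ 2) ^ (-s))
  simp only [heven] at this
  rw [this, hIoi_val]
  ring

lemma my_moment_scaled {n : ℕ} {c s : ℝ} (hc : 0 < c) (h : (n:ℝ) + 1/2 < s) :
    Integrable (fun y : ℝ => y ^ (2 * n) * (c + y ^ 2) ^ (-s)) ∧
    ∫ y : ℝ, y ^ (2 * n) * (c + y ^ 2) ^ (-s)
      = c ^ ((n:ℝ) + 1/2 - s) *
        (Real.Gamma ((n:ℝ) + 1/2) * Real.Gamma (s - ((n:ℝ) + 1/2)) / Real.Gamma s) := by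
  obtain ⟨hf_int, hf_val⟩ := my_even_moment (n := n) h
  set r : ℝ := Real.sqrt c with hr_def
  have hr : 0 < r := Real.sqrt_pos.mpr hc
  have hr2 : r ^ 2 = c := Real.sq_sqrt hc.le
  set g : ℝ → ℝ := fun y => y ^ (2 * n) * (c + y ^ 2) ^ (-s) with hg_def
  have hcomp : (fun z : ℝ => g (r * z))
      = fun z : ℝ => (r ^ (2 * n) * c ^ (-s)) * (z ^ (2 * n) * (1 + z ^ 2) ^ (-s)) := by
    funext z
    have e1 : c + (r * z) ^ 2 = c * (1 + z ^ 2) := by rw [mul_pow, hr2]; ring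
    simp only [hg_def]
    rw [e1, Real.mul_rpow hc.le (by positivity : (0:ℝ) ≤ 1 + z ^ 2), mul_pow]
    ring
  have hint : Integrable g := by
    rw [← integrable_comp_mul_left_iff g hr.ne']
    rw [hcomp]
    exact hf_int.const_mul _
  refine ⟨hint, ?_⟩
  have := MeasureTheory.Measure.integral_comp_mul_left g r
  rw [hcomp, integral_const_mul, hf_val, smul_eq_mul, abs_of_pos (by positivity)] at this
  have hsolve : ∫ y, g y = r * (r ^ (2 * n) * c ^ (-s) *
      (Real.Gamma ((n:ℝ) + 1/2) * Real.Gamma (s - ((n:ℝ) + 1/2)) / Real.Gamma s)) := by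
    rw [this, ← mul_assoc, mul_inv_cancel₀ hr.ne', one_mul]
  rw [hsolve]
  have hpow : r * (r ^ (2 * n) * c ^ (-s)) = c ^ ((n:ℝ) + 1/2 - s) := by
    have : r * r ^ (2 * n) = r ^ (2 * n + 1) := by ring
    rw [← mul_assoc, this, hr_def, Real.sqrt_eq_rpow, ← Real.rpow_natCast (c ^ ((1:ℝ)/2)),
      ← Real.rpow_mul hc.le, ← Real.rpow_add hc]
    congr 1
    push_cast
    ring
  rw [← mul_assoc, hpow]

theorem integral_monomial_over_plane {ρ : ℝ} (hρ : 0 < ρ) (p q m : ℕ)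
    (hpq : p ≤ q) (hqm : q < m) :
    Integrable (fun ξ : ℝ × ℝ =>
        ξ.1 ^ (2 * (q - p)) * ξ.2 ^ (2 * p) / ((ξ.1 ^ 2 + ξ.2 ^ 2) / ρ + 1) ^ (m + 1)) ∧
    (∫ ξ : ℝ × ℝ,
        ξ.1 ^ (2 * (q - p)) * ξ.2 ^ (2 * p) / ((ξ.1 ^ 2 + ξ.2 ^ 2) / ρ + 1) ^ (m + 1)) =
      ρ ^ (q + 1) * Real.Gamma ((q : ℝ) - (p : ℝ) + 1 / 2) *
        Real.Gamma ((p : ℝ) + 1 / 2) * Real.Gamma ((m : ℝ) - (q : ℝ)) /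
        Real.Gamma ((m : ℝ) + 1) := by
  set A : ℕ := q - p with hA_def
  have hA : (A:ℝ) = (q:ℝ) - (p:ℝ) := by
    rw [hA_def, Nat.cast_sub hpq]
  have hpm : (p:ℝ) < (m:ℝ) := by exact_mod_cast lt_of_le_of_lt hpq hqm
  have hqm' : (q:ℝ) < (m:ℝ) := by exact_mod_cast hqm
  have h1 : (p:ℝ) + 1/2 < (m:ℝ) + 1 := by linarith
  set s₂ : ℝ := (m:ℝ) + 1 - ((p:ℝ) + 1/2) with hs₂
  have h2 : (A:ℝ) + 1/2 < s₂ := by rw [hs₂, hA]; linarith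
  set K : ℝ := Real.Gamma ((p:ℝ) + 1/2) * Real.Gamma s₂ / Real.Gamma ((m:ℝ) + 1) with hK
  set G : ℝ × ℝ → ℝ := fun ξ =>
    (ρ ^ (m + 1) * ξ.1 ^ (2 * A)) *
      (ξ.2 ^ (2 * p) * (ρ + ξ.1 ^ 2 + ξ.2 ^ 2) ^ (-((m:ℝ) + 1))) with hG_def
  have hFG : (fun ξ : ℝ × ℝ =>
      ξ.1 ^ (2 * A) * ξ.2 ^ (2 * p) / ((ξ.1 ^ 2 + ξ.2 ^ 2) / ρ + 1) ^ (m + 1)) = G := by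
    funext ξ
    obtain ⟨x, y⟩ := ξ
    simp only [hG_def]
    have hpos : (0:ℝ) < ρ + x ^ 2 + y ^ 2 := by positivity
    have e1 : (x ^ 2 + y ^ 2) / ρ + 1 = (ρ + x ^ 2 + y ^ 2) / ρ := by
      field_simp
      ring
    have e2 : (ρ + x ^ 2 + y ^ 2) ^ (-((m:ℝ) + 1))
        = ((ρ + x ^ 2 + y ^ 2) ^ (m + 1 : ℕ))⁻¹ := by
      rw [show -((m:ℝ) + 1) = -(((m + 1 : ℕ)):ℝ) by push_cast; ring,
        Real.rpow_neg hpos.le, Real.rpow_natCast]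
    rw [e1, e2, div_pow]
    have hd : (ρ + x ^ 2 + y ^ 2) ^ (m + 1) ≠ 0 := by positivity
    have hr : ρ ^ (m + 1) ≠ 0 := by positivity
    field_simp
  have hcx : ∀ x : ℝ, (0:ℝ) < ρ + x ^ 2 := fun x => by positivity
  have hinner_int : ∀ x : ℝ,
      Integrable (fun y : ℝ => y ^ (2 * p) * ((ρ + x ^ 2) + y ^ 2) ^ (-((m:ℝ) + 1))) :=
    fun x => (my_moment_scaled (hcx x) h1).1
  have hinner_val : ∀ x : ℝ,
      ∫ y : ℝ, y ^ (2 * p) * ((ρ + x ^ 2) + y ^ 2) ^ (-((m:ℝ) + 1))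
        = (ρ + x ^ 2) ^ (-s₂) * K := by
    intro x
    rw [(my_moment_scaled (hcx x) h1).2, ← hs₂, hK,
      show (p:ℝ) + 1/2 - ((m:ℝ) + 1) = -s₂ by rw [hs₂]; ring]
  obtain ⟨houter_int, houter_val⟩ := my_moment_scaled (n := A) hρ h2
  have hGmeas : AEStronglyMeasurable G (volume : Measure (ℝ × ℝ)) := by
    apply Continuous.aestronglyMeasurable
    apply Continuous.mul
    · fun_prop
    · apply Continuous.mul
      · fun_prop
      · apply Continuous.rpow_const
        · fun_prop
        · intro ξ; left; positivity
  have hGnn : ∀ z : ℝ × ℝ, 0 ≤ G z := by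
    rintro ⟨x, y⟩
    simp only [hG_def]
    have h1' : (0:ℝ) ≤ x ^ (2 * A) := by rw [pow_mul]; positivity
    have h2' : (0:ℝ) ≤ y ^ (2 * p) := by rw [pow_mul]; positivity
    have h3' : (0:ℝ) ≤ (ρ + x ^ 2 + y ^ 2) ^ (-((m:ℝ) + 1)) :=
      Real.rpow_nonneg (by positivity) _
    positivity
  have hGyfun : ∀ x : ℝ, (fun y : ℝ => G (x, y))
      = fun y : ℝ => (ρ ^ (m + 1) * x ^ (2 * A)) *
          (y ^ (2 * p) * ((ρ + x ^ 2) + y ^ 2) ^ (-((m:ℝ) + 1))) := by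
    intro x; funext y; simp only [hG_def]
  have hGint : Integrable G := by
    rw [show (volume : Measure (ℝ × ℝ)) = (volume : Measure ℝ).prod volume from rfl]
    refine (integrable_prod_iff ?_).mpr ⟨?_, ?_⟩
    · exact hGmeas
    · refine ae_of_all _ fun x => ?_
      rw [hGyfun x]
      exact ((hinner_int x).const_mul _)
    · have heq : (fun x : ℝ => ∫ y : ℝ, ‖G (x, y)‖)
          = fun x : ℝ => (ρ ^ (m + 1) * K) * (x ^ (2 * A) * (ρ + x ^ 2) ^ (-s₂)) := by
        funext x
        simp_rw [Real.norm_eq_abs, fun y => abs_of_nonneg (hGnn (x, y))]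
        rw [hGyfun x, integral_const_mul, hinner_val x]
        ring
      rw [heq]
      exact houter_int.const_mul _
  constructor
  · rw [hFG]; exact hGint
  rw [hFG, show (volume : Measure (ℝ × ℝ)) = (volume : Measure ℝ).prod volume from rfl,
    MeasureTheory.integral_prod _ hGint]
  have hstep : (fun x : ℝ => ∫ y : ℝ, G (x, y))
      = fun x : ℝ => (ρ ^ (m + 1) * K) * (x ^ (2 * A) * (ρ + x ^ 2) ^ (-s₂)) := by
    funext x
    rw [hGyfun x, integral_const_mul, hinner_val x]
    ring
  rw [hstep, integral_const_mul, houter_val]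
  -- final algebra
  have hΓs₂ : Real.Gamma s₂ ≠ 0 := (Real.Gamma_pos_of_pos (by rw [hs₂]; linarith)).ne'
  have hΓm : Real.Gamma ((m:ℝ) + 1) ≠ 0 :=
    (Real.Gamma_pos_of_pos (by positivity)).ne'
  rw [show s₂ - ((A:ℝ) + 1/2) = (m:ℝ) - (q:ℝ) by rw [hs₂, hA]; ring,
    show (A:ℝ) + 1/2 = (q:ℝ) - (p:ℝ) + 1/2 by rw [hA],
    show (q:ℝ) - (p:ℝ) + 1/2 - s₂ = (q:ℝ) - (m:ℝ) by rw [hs₂]; ring, hK]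
  have hcollapse : ρ ^ (m + 1) * ρ ^ ((q:ℝ) - (m:ℝ)) = ρ ^ (q + 1) := by
    rw [← Real.rpow_natCast ρ (m + 1), ← Real.rpow_add hρ,
      show ((m + 1 : ℕ):ℝ) + ((q:ℝ) - (m:ℝ)) = ((q + 1 : ℕ):ℝ) by push_cast; ring,
      Real.rpow_natCast]
  have hfin : ρ ^ (m + 1) * K * (ρ ^ ((q:ℝ) - (m:ℝ)) *
        (Real.Gamma ((q:ℝ) - (p:ℝ) + 1/2) * Real.Gamma ((m:ℝ) - (q:ℝ)) / Real.Gamma s₂))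
      = (ρ ^ (m + 1) * ρ ^ ((q:ℝ) - (m:ℝ))) * (Real.Gamma s₂ / Real.Gamma s₂) *
        (Real.Gamma ((q:ℝ) - (p:ℝ) + 1/2) * Real.Gamma ((p:ℝ) + 1/2) *
          Real.Gamma ((m:ℝ) - (q:ℝ)) / Real.Gamma ((m:ℝ) + 1)) := by
    rw [hK]; ring
  rw [hfin, div_self hΓs₂, mul_one, hcollapse]
  ring
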